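/- Fix a ≥ 0, σ > 0, k ∈ ℝ, T > 0 with σ² ≤ 4a. Define X₀(t, x) = e^{−kt} x + ψ_k(t)(a − σ²/4) where ψ_k(t) = (1 − e^{−kt})/k (and ψ_0(t) = t). For f ∈ C^m([0,∞)) with all derivatives up to order m bounded by a constant times (1 + x^L), define ‖f‖_{m,L} = max_{0≤j≤m} sup_{x≥0} |f^{(j)}(x)|/(1 + x^L). Then there is a constant K ≥ 0, independent of f, such that for all t ∈ [0, T], ‖f(X₀(t, ·))‖_{m,L} ≤ e^{Kt} ‖f‖_{m,L}. -/

import Mathlib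

set_option maxHeartbeats 1000000

/-- The weighted norm `‖f‖_{m,L} = max_{0≤j≤m} sup_{x≥0} |f^{(j)}(x)|/(1+x^L)`
(derivatives taken within `[0,∞)`). -/
noncomputable def normML (m L : ℕ) (f : ℝ → ℝ) : ℝ :=
  ⨆ j : Fin (m + 1), ⨆ x : Set.Ici (0 : ℝ),
    |iteratedDerivWithin (j : ℕ) f (Set.Ici 0) (x : ℝ)| / (1 + (x : ℝ) ^ L)

/-- `ψ_k(t) = (1 - e^{-kt})/k`, with `ψ_0(t) = t`. -/
noncomputable def psik (k t : ℝ) : ℝ := if k = 0 then t else (1 - Real.exp (-k * t)) / k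

lemma aux_pow (L : ℕ) {u v : ℝ} (hu : 0 ≤ u) (hv : 0 ≤ v) :
    1 + (u + v) ^ L ≤ (1 + v) ^ L * (1 + u ^ L) := by
  have h1 : (u + v) ^ L
      = (∑ i ∈ Finset.range L, u ^ i * v ^ (L - i) * (L.choose i : ℝ)) + u ^ L := by
    rw [add_pow, Finset.sum_range_succ]; simp
  have h2 : (1 + v) ^ L
      = (∑ i ∈ Finset.range L, v ^ (L - i) * (L.choose i : ℝ)) + 1 := by
    rw [add_pow, Finset.sum_range_succ]; simp
  have hsum : (∑ i ∈ Finset.range L, u ^ i * v ^ (L - i) * (L.choose i : ℝ))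
      ≤ (1 + u ^ L) * ∑ i ∈ Finset.range L, v ^ (L - i) * (L.choose i : ℝ) := by
    rw [Finset.mul_sum]
    apply Finset.sum_le_sum
    intro i hi
    have hiL : i ≤ L := (Finset.mem_range.mp hi).le
    have hui : u ^ i ≤ 1 + u ^ L := by
      rcases le_total u 1 with h | h
      · have h' : u ^ i ≤ 1 := pow_le_one₀ hu h
        nlinarith [pow_nonneg hu L]
      · have h' : u ^ i ≤ u ^ L := pow_le_pow_right₀ h hiL
        nlinarith
    have hnn : 0 ≤ v ^ (L - i) * (L.choose i : ℝ) := by positivity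
    calc u ^ i * v ^ (L - i) * (L.choose i : ℝ)
        = u ^ i * (v ^ (L - i) * (L.choose i : ℝ)) := by ring
      _ ≤ (1 + u ^ L) * (v ^ (L - i) * (L.choose i : ℝ)) :=
          mul_le_mul_of_nonneg_right hui hnn
  nlinarith [pow_nonneg hu L]

lemma psik_nonneg (k : ℝ) {t : ℝ} (ht : 0 ≤ t) : 0 ≤ psik k t := by
  unfold psik
  split_ifs with hk
  · exact ht
  · rcases lt_or_gt_of_ne hk with hneg | hpos
    · have h1 : (1:ℝ) ≤ Real.exp (-k * t) := by
        rw [← Real.exp_zero]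
        apply Real.exp_le_exp.mpr; nlinarith
      rw [div_nonneg_iff]
      exact Or.inr ⟨by linarith, hneg.le⟩
    · have h1 : Real.exp (-k * t) ≤ 1 := by
        rw [← Real.exp_zero]
        apply Real.exp_le_exp.mpr; nlinarith
      have h2 : 0 ≤ 1 - Real.exp (-k * t) := by linarith
      positivity

lemma psik_le (k : ℝ) {t : ℝ} (ht : 0 ≤ t) : psik k t ≤ t * Real.exp (|k| * t) := by
  unfold psik
  have hexp1 : (1:ℝ) ≤ Real.exp (|k| * t) := by
    rw [← Real.exp_zero]; apply Real.exp_le_exp.mpr; positivity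
  split_ifs with hk
  · nlinarith
  · rcases lt_or_gt_of_ne hk with hneg | hpos
    · rw [div_le_iff_of_neg hneg]
      have habs : |k| = -k := abs_of_neg hneg
      have h1 : (k * t) + 1 ≤ Real.exp (k * t) := Real.add_one_le_exp _
      have hmul : Real.exp (k * t) * Real.exp (-k * t) = 1 := by
        rw [← Real.exp_add]; ring_nf; exact Real.exp_zero
      have hpos' : 0 < Real.exp (-k * t) := Real.exp_pos _
      rw [habs]
      nlinarith
    · have h1 : (-k * t) + 1 ≤ Real.exp (-k * t) := Real.add_one_le_exp _
      have h2 : (1 - Real.exp (-k * t)) / k ≤ t := by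
        rw [div_le_iff₀ hpos]; nlinarith
      nlinarith

lemma key_deriv (f : ℝ → ℝ) (M : ℕ) (hf : ContDiffOn ℝ M f (Set.Ici 0))
    {c d : ℝ} (hc : 0 < c) (hd : 0 ≤ d) :
    ∀ j, j ≤ M → ∀ x : ℝ, 0 ≤ x →
      iteratedDerivWithin j (fun y => f (c * y + d)) (Set.Ici 0) x
        = c ^ j * iteratedDerivWithin j f (Set.Ici 0) (c * x + d) := by
  intro j
  induction j with
  | zero => intro _ x _; simp
  | succ j ih =>
    intro hj x hx
    have hj' : j ≤ M := Nat.le_of_succ_le hj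
    have hjM : (j : WithTop ℕ∞) < (M : WithTop ℕ∞) := by exact_mod_cast hj
    have hs : UniqueDiffOn ℝ (Set.Ici (0:ℝ)) := uniqueDiffOn_Ici 0
    have hx' : x ∈ Set.Ici (0:ℝ) := hx
    have hy : (0:ℝ) ≤ c * x + d := by positivity
    have hy' : c * x + d ∈ Set.Ici (0:ℝ) := hy
    rw [iteratedDerivWithin_succ]
    have hcong : derivWithin (iteratedDerivWithin j (fun y => f (c*y+d)) (Set.Ici 0)) (Set.Ici 0) x
        = derivWithin (fun y => c ^ j * iteratedDerivWithin j f (Set.Ici 0) (c*y+d)) (Set.Ici 0) x := by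
      apply derivWithin_congr
      · intro y hyy; exact ih hj' y hyy
      · exact ih hj' x hx
    rw [hcong]
    have hdiff : DifferentiableOn ℝ (iteratedDerivWithin j f (Set.Ici 0)) (Set.Ici 0) :=
      hf.differentiableOn_iteratedDerivWithin hjM hs
    have hF : HasDerivWithinAt (iteratedDerivWithin j f (Set.Ici 0))
        (derivWithin (iteratedDerivWithin j f (Set.Ici 0)) (Set.Ici 0) (c*x+d))
        (Set.Ici 0) (c*x+d) :=
      (hdiff (c*x+d) hy').hasDerivWithinAt
    have haff : HasDerivWithinAt (fun y : ℝ => c * y + d) c (Set.Ici 0) x := by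
      simpa using ((hasDerivWithinAt_id x (Set.Ici 0)).const_mul c).add_const d
    have hmaps : Set.MapsTo (fun y : ℝ => c * y + d) (Set.Ici 0) (Set.Ici 0) := by
      intro y hyy
      simp only [Set.mem_Ici] at *
      positivity
    have hcomp := hF.comp x haff hmaps
    have hfinal := (hcomp.const_mul (c ^ j)).derivWithin (hs x hx')
    rw [show (fun y => c ^ j * iteratedDerivWithin j f (Set.Ici 0) (c*y+d))
        = fun y => c ^ j * ((iteratedDerivWithin j f (Set.Ici 0)) ∘ (fun y : ℝ => c * y + d)) y from rfl]
    rw [hfinal]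
    rw [iteratedDerivWithin_succ]
    ring

/-- With `X₀(t,x) = e^{-kt} x + ψ_k(t)(a - σ²/4)` and `σ² ≤ 4a`, there is `K ≥ 0`, independent
of `f`, such that `‖f(X₀(t,·))‖_{m,L} ≤ e^{Kt} ‖f‖_{m,L}` for all `t ∈ [0,T]` and all `f` in
the weighted `C^m` space. -/
theorem stmt7 (a σ k T : ℝ) (ha : 0 ≤ a) (hσ : 0 < σ) (hT : 0 < T)
    (hcond : σ ^ 2 ≤ 4 * a) (m L : ℕ) :
    ∃ K : ℝ, 0 ≤ K ∧ ∀ f : ℝ → ℝ, ContDiffOn ℝ m f (Set.Ici 0) →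
      (∃ C : ℝ, ∀ j ≤ m, ∀ x : ℝ, 0 ≤ x →
        |iteratedDerivWithin j f (Set.Ici 0) x| ≤ C * (1 + x ^ L)) →
      ∀ t ∈ Set.Icc (0 : ℝ) T,
        normML m L (fun x => f (Real.exp (-k * t) * x + psik k t * (a - σ ^ 2 / 4))) ≤
          Real.exp (K * t) * normML m L f := by
  set ET : ℝ := Real.exp (|k| * T) with hET
  have hET1 : (1:ℝ) ≤ ET := by
    rw [hET, ← Real.exp_zero]; apply Real.exp_le_exp.mpr; positivity
  refine ⟨(m : ℝ) * |k| + (L : ℝ) * |k| + (L : ℝ) * (a * ET), ?_, ?_⟩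
  · have h3 : (0:ℝ) ≤ (L : ℝ) * (a * ET) :=
      mul_nonneg (Nat.cast_nonneg L) (mul_nonneg ha (by linarith))
    have h1 : (0:ℝ) ≤ (m : ℝ) * |k| := by positivity
    have h2 : (0:ℝ) ≤ (L : ℝ) * |k| := by positivity
    linarith
  intro f hf hC t ht
  obtain ⟨C, hC⟩ := hC
  obtain ⟨ht0, htT⟩ := ht
  set K : ℝ := (m : ℝ) * |k| + (L : ℝ) * |k| + (L : ℝ) * (a * ET) with hK
  set c : ℝ := Real.exp (-k * t) with hc_def
  set d : ℝ := psik k t * (a - σ ^ 2 / 4) with hd_def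
  have hc : 0 < c := Real.exp_pos _
  have haσ : 0 ≤ a - σ ^ 2 / 4 := by nlinarith
  have hd : 0 ≤ d := mul_nonneg (psik_nonneg k ht0) haσ
  set N : ℝ := normML m L f with hN
  -- nonnegativity of N
  have hN0 : 0 ≤ N := by
    rw [hN, normML]
    apply Real.iSup_nonneg; intro j
    apply Real.iSup_nonneg; intro x
    exact div_nonneg (abs_nonneg _)
      (by nlinarith [pow_nonneg (show (0:ℝ) ≤ (x:ℝ) from x.2) L])
  -- pointwise bound by N
  have hNle : ∀ j ≤ m, ∀ y : ℝ, 0 ≤ y →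
      |iteratedDerivWithin j f (Set.Ici 0) y| ≤ N * (1 + y ^ L) := by
    intro j hj y hy
    have hpos : (0:ℝ) < 1 + y ^ L := by positivity
    have hbdd : ∀ j' : Fin (m+1), BddAbove (Set.range fun x : Set.Ici (0:ℝ) =>
        |iteratedDerivWithin (j' : ℕ) f (Set.Ici 0) (x : ℝ)| / (1 + (x : ℝ) ^ L)) := by
      intro j'
      refine ⟨C, ?_⟩
      rintro _ ⟨x, rfl⟩
      have hx : (0:ℝ) ≤ (x:ℝ) := x.2
      have hp : (0:ℝ) < 1 + (x:ℝ) ^ L := by positivity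
      rw [div_le_iff₀ hp]
      exact hC (j' : ℕ) (Nat.lt_succ_iff.mp j'.2) x hx
    have houter : BddAbove (Set.range fun j' : Fin (m+1) => ⨆ x : Set.Ici (0:ℝ),
        |iteratedDerivWithin (j' : ℕ) f (Set.Ici 0) (x : ℝ)| / (1 + (x : ℝ) ^ L)) :=
      Finite.bddAbove_range _
    have step1 : |iteratedDerivWithin j f (Set.Ici 0) y| / (1 + y ^ L)
        ≤ ⨆ x : Set.Ici (0:ℝ),
          |iteratedDerivWithin ((⟨j, Nat.lt_succ_of_le hj⟩ : Fin (m+1)) : ℕ) f (Set.Ici 0) (x : ℝ)| / (1 + (x : ℝ) ^ L) :=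
      le_ciSup (hbdd ⟨j, Nat.lt_succ_of_le hj⟩) (⟨y, hy⟩ : Set.Ici (0:ℝ))
    have step2 := le_ciSup houter (⟨j, Nat.lt_succ_of_le hj⟩ : Fin (m+1))
    calc |iteratedDerivWithin j f (Set.Ici 0) y|
        ≤ (⨆ x : Set.Ici (0:ℝ),
          |iteratedDerivWithin j f (Set.Ici 0) (x : ℝ)| / (1 + (x : ℝ) ^ L)) * (1 + y ^ L) := by
          rw [← div_le_iff₀ hpos]; exact step1
      _ ≤ N * (1 + y ^ L) := by
          apply mul_le_mul_of_nonneg_right _ hpos.le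
          rw [hN, normML]; exact step2
  -- main estimate
  rw [normML]
  have hrhs : 0 ≤ Real.exp (K * t) * N := mul_nonneg (Real.exp_pos _).le hN0
  apply Real.iSup_le _ hrhs
  intro j
  apply Real.iSup_le _ hrhs
  intro x
  have hx0 : (0:ℝ) ≤ (x:ℝ) := x.2
  have hjm : (j : ℕ) ≤ m := Nat.lt_succ_iff.mp j.2
  rw [key_deriv f m hf hc hd (j : ℕ) hjm (x:ℝ) hx0]
  have hpx : (0:ℝ) < 1 + (x:ℝ) ^ L := by positivity
  rw [div_le_iff₀ hpx, abs_mul, abs_pow, abs_of_pos hc]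
  set y : ℝ := c * (x:ℝ) + d with hy_def
  have hy0 : (0:ℝ) ≤ y := by positivity
  set E : ℝ := Real.exp (|k| * t) with hE
  have hE1 : (1:ℝ) ≤ E := by
    rw [hE, ← Real.exp_zero]; apply Real.exp_le_exp.mpr; positivity
  have hcE : c ≤ E := by
    rw [hc_def, hE]; apply Real.exp_le_exp.mpr
    have : |k * t| = |k| * t := by rw [abs_mul, abs_of_nonneg ht0]
    nlinarith [neg_abs_le (k * t), abs_nonneg (k*t)]
  have h1 : |iteratedDerivWithin (j:ℕ) f (Set.Ici 0) y| ≤ N * (1 + y ^ L) :=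
    hNle (j:ℕ) hjm y hy0
  have h2 : 1 + y ^ L ≤ (1 + d) ^ L * (1 + (c * (x:ℝ)) ^ L) := by
    rw [hy_def]
    exact aux_pow L (by positivity) hd
  have h4 : 1 + (c * (x:ℝ)) ^ L ≤ E ^ L * (1 + (x:ℝ) ^ L) := by
    have h3 : (c * (x:ℝ)) ^ L ≤ E ^ L * (x:ℝ) ^ L := by
      rw [mul_pow]
      apply mul_le_mul_of_nonneg_right (pow_le_pow_left₀ hc.le hcE L) (by positivity)
    have h1E : (1:ℝ) ≤ E ^ L := one_le_pow₀ hE1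
    nlinarith [pow_nonneg hx0 L]
  have hd2 : d ≤ a * ET * t := by
    have hpk : psik k t ≤ t * E := psik_le k ht0
    have hEET : E ≤ ET := by
      rw [hE, hET]; apply Real.exp_le_exp.mpr
      exact mul_le_mul_of_nonneg_left htT (abs_nonneg k)
    calc d ≤ psik k t * a := mul_le_mul_of_nonneg_left (by nlinarith) (psik_nonneg k ht0)
      _ ≤ (t * ET) * a := by
          apply mul_le_mul_of_nonneg_right _ ha
          calc psik k t ≤ t * E := hpk
            _ ≤ t * ET := mul_le_mul_of_nonneg_left hEET ht0
      _ = a * ET * t := by ring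
  have h5 : (1 + d) ^ L ≤ Real.exp ((L:ℝ) * (a * ET) * t) := by
    have hde : 1 + d ≤ Real.exp d := by
      have := Real.add_one_le_exp d; linarith
    calc (1 + d) ^ L ≤ (Real.exp d) ^ L := pow_le_pow_left₀ (by linarith) hde L
      _ = Real.exp ((L:ℝ) * d) := (Real.exp_nat_mul d L).symm
      _ ≤ Real.exp ((L:ℝ) * (a * ET) * t) := by
          apply Real.exp_le_exp.mpr
          have : (0:ℝ) ≤ (L:ℝ) := Nat.cast_nonneg L
          nlinarith
  have h6 : c ^ (j:ℕ) ≤ Real.exp ((m:ℝ) * |k| * t) := by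
    calc c ^ (j:ℕ) ≤ E ^ (j:ℕ) := pow_le_pow_left₀ hc.le hcE _
      _ ≤ E ^ m := pow_le_pow_right₀ hE1 hjm
      _ = Real.exp ((m:ℝ) * (|k| * t)) := (Real.exp_nat_mul _ m).symm
      _ = Real.exp ((m:ℝ) * |k| * t) := by ring_nf
  have hEL : E ^ L = Real.exp ((L:ℝ) * |k| * t) := by
    rw [hE, ← Real.exp_nat_mul]; ring_nf
  calc c ^ (j:ℕ) * |iteratedDerivWithin (j:ℕ) f (Set.Ici 0) y|
      ≤ c ^ (j:ℕ) * (N * (1 + y ^ L)) :=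
        mul_le_mul_of_nonneg_left h1 (by positivity)
    _ ≤ c ^ (j:ℕ) * (N * ((1 + d) ^ L * (E ^ L * (1 + (x:ℝ) ^ L)))) := by
        apply mul_le_mul_of_nonneg_left _ (by positivity)
        apply mul_le_mul_of_nonneg_left _ hN0
        calc 1 + y ^ L ≤ (1 + d) ^ L * (1 + (c * (x:ℝ)) ^ L) := h2
          _ ≤ (1 + d) ^ L * (E ^ L * (1 + (x:ℝ) ^ L)) :=
            mul_le_mul_of_nonneg_left h4 (by positivity)
    _ ≤ Real.exp ((m:ℝ) * |k| * t) * (N * (Real.exp ((L:ℝ) * (a * ET) * t) * (E ^ L * (1 + (x:ℝ) ^ L)))) := by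
        apply mul_le_mul h6 _ (by positivity) (Real.exp_pos _).le
        apply mul_le_mul_of_nonneg_left _ hN0
        exact mul_le_mul_of_nonneg_right h5 (by positivity)
    _ = Real.exp (K * t) * N * (1 + (x:ℝ) ^ L) := by
        have hmul : Real.exp ((m:ℝ) * |k| * t) * Real.exp ((L:ℝ) * (a * ET) * t) * Real.exp ((L:ℝ) * |k| * t)
            = Real.exp (K * t) := by
          rw [← Real.exp_add, ← Real.exp_add, hK]; congr 1; ring
        rw [hEL, ← hmul]; ring
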